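/- Let N ≥ 1, let (m_j), (p_j) be positive integer sequences, B_{j,k} integers, and for a sequence a = (α_j) of common divisors (α_j ∣ gcd(m_j,p_j)) define the N×N integer matrix F^(a) by F^(a)_{j,k} = (δ_{j,k} p_k + B_{j,k} m_k)/α_k. Suppose p_j = L − 2·Σ_{k=1}^N min(j,k)·m_k with L ≥ 2·Σ_{k=1}^N k·m_k, and B_{j,k} = 2·min(j,k). Then det F^(a) = L·p₁·p₂⋯p_{N−1}/(α₁⋯α_N). -/

import Mathlib

open Finset in
/-- determinant of the matrix `F^(a)` with
`F^(a)_{j,k} = (δ_{j,k} p_k + 2 min(j,k) m_k)/α_k`, where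
`p_j = L − 2 Σ_k min(j,k) m_k` and `L ≥ 2 Σ_k k m_k`:
`det F^(a) = L p₁ ⋯ p_{N−1} / (α₁ ⋯ α_N)`, stated in the exact form
`(α₁ ⋯ α_N) · det F^(a) = L p₁ ⋯ p_{N−1}`. -/
theorem det_F_eq (n : ℕ) (L : ℤ) (m α : Fin (n + 1) → ℤ) (p : Fin (n + 1) → ℤ)
    (hm : ∀ k, 1 ≤ m k) (hα : ∀ k, 1 ≤ α k)
    (hαm : ∀ k, α k ∣ m k) (hαp : ∀ k, α k ∣ p k)
    (hL : 2 * ∑ k, ((k.1 : ℤ) + 1) * m k ≤ L)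
    (hp : ∀ j, p j = L - 2 * ∑ k, (min (j.1 + 1) (k.1 + 1) : ℤ) * m k)
    (F : Matrix (Fin (n + 1)) (Fin (n + 1)) ℤ)
    (hF : ∀ j k, α k * F j k =
      (if j = k then p k else 0) + 2 * (min (j.1 + 1) (k.1 + 1) : ℤ) * m k) :
    (∏ k, α k) * F.det = L * ∏ j ∈ univ.erase (Fin.last n), p j := by
  classical
  set G : Matrix (Fin (n+1)) (Fin (n+1)) ℤ := Matrix.of fun j k => α k * F j k with hGdef
  have hGentry : ∀ j k, G j k =
      (if j = k then p k else 0) + 2 * (min (j.1 + 1) (k.1 + 1) : ℤ) * m k :=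
    fun j k => hF j k
  -- each row of G sums to L
  have hrow : ∀ j, ∑ k, G j k = L := by
    intro j
    simp only [hGentry]
    rw [Finset.sum_add_distrib, Finset.sum_ite_eq univ j p, if_pos (mem_univ j)]
    have h2 : ∑ k, 2 * (min (j.1 + 1) (k.1 + 1) : ℤ) * m k
        = 2 * ∑ k, (min (j.1 + 1) (k.1 + 1) : ℤ) * m k := by
      rw [Finset.mul_sum]; apply Finset.sum_congr rfl; intro k _; ring
    rw [h2]
    have := hp j
    linarith
  set C : Matrix (Fin (n+1)) (Fin (n+1)) ℤ :=
    Matrix.of (fun l k => if k = Fin.last n then 1 else if l = k then 1 else 0) with hCdef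
  set R : Matrix (Fin (n+1)) (Fin (n+1)) ℤ :=
    Matrix.of (fun j i => if i = j then 1 else if j.1 + 1 = i.1 then -1 else 0) with hRdef
  have hCdet : C.det = 1 := by
    rw [Matrix.det_of_upperTriangular]
    · rw [Finset.prod_eq_one]
      intro k _
      simp only [hCdef, Matrix.of_apply]
      by_cases h : k = Fin.last n <;> simp [h]
    · intro i j hij
      simp only [id_eq] at hij
      simp only [hCdef, Matrix.of_apply]
      have h1 : j ≠ Fin.last n := by
        intro h; subst h; exact absurd (Fin.le_last i) (not_le.2 hij)
      rw [if_neg h1, if_neg (ne_of_gt hij)]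
  have hRdet : R.det = 1 := by
    rw [Matrix.det_of_upperTriangular]
    · rw [Finset.prod_eq_one]
      intro k _
      simp [hRdef]
    · intro i j hij
      simp only [id_eq] at hij
      simp only [hRdef, Matrix.of_apply]
      rw [if_neg, if_neg]
      · omega
      · exact fun h => absurd h (ne_of_lt hij)
  -- entries of G * C
  have hGC : ∀ j k, (G * C) j k = if k = Fin.last n then L else G j k := by
    intro j k
    rw [Matrix.mul_apply]
    by_cases hk : k = Fin.last n
    · subst hk
      simp only [hCdef, Matrix.of_apply, eq_self_iff_true, if_true, mul_one]
      exact hrow j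
    · rw [if_neg hk]
      simp only [hCdef, Matrix.of_apply, if_neg hk, mul_ite, mul_one, mul_zero]
      rw [Finset.sum_ite_eq' univ k, if_pos (mem_univ k)]
  -- entries of M := R * (G * C)
  have hMentry : ∀ j k, (R * (G * C)) j k
      = (G * C) j k - ∑ i, (if j.1 + 1 = i.1 then (G * C) i k else 0) := by
    intro j k
    rw [Matrix.mul_apply]
    have key : ∀ i, R j i * (G * C) i k
        = (if i = j then (G * C) i k else 0) - (if j.1 + 1 = i.1 then (G * C) i k else 0) := by
      intro i
      simp only [hRdef, Matrix.of_apply]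
      by_cases h1 : i = j
      · subst h1
        have h2 : ¬ (i.1 + 1 = i.1) := by omega
        simp [h2]
      · by_cases h2 : j.1 + 1 = i.1 <;> simp [h1, h2]
    rw [Finset.sum_congr rfl fun i _ => key i, Finset.sum_sub_distrib,
      Finset.sum_ite_eq' univ j, if_pos (mem_univ j)]
  have hsum_succ : ∀ (j : Fin (n+1)) (f : Fin (n+1) → ℤ) (hj : j.1 < n),
      (∑ i, (if j.1 + 1 = i.1 then f i else 0)) = f ⟨j.1 + 1, by omega⟩ := by
    intro j f hj
    rw [Finset.sum_eq_single (⟨j.1 + 1, by omega⟩ : Fin (n+1))]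
    · simp
    · intro b _ hb
      rw [if_neg]
      intro h
      exact hb (Fin.ext h.symm)
    · intro h; exact absurd (mem_univ _) h
  have hsum_last : ∀ (j : Fin (n+1)) (f : Fin (n+1) → ℤ) (hj : j.1 = n),
      (∑ i, (if j.1 + 1 = i.1 then f i else 0)) = 0 := by
    intro j f hj
    apply Finset.sum_eq_zero
    intro i _
    rw [if_neg]
    have := i.2
    omega
  -- the matrix M
  set M := R * (G * C) with hMdef
  have hMlastlast : M (Fin.last n) (Fin.last n) = L := by
    rw [hMentry, hGC, if_pos rfl, hsum_last _ _ rfl, sub_zero]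
  have hMcol : ∀ j, j ≠ Fin.last n → M j (Fin.last n) = 0 := by
    intro j hj
    have hjn : j.1 < n := by
      rcases eq_or_ne j (Fin.last n) with h | h
      · exact absurd h hj
      · exact Fin.val_lt_last h
    rw [hMentry, hGC, if_pos rfl, hsum_succ _ _ hjn, hGC, if_pos rfl, sub_self]
  have hMtri : ∀ j k : Fin (n+1), j ≠ Fin.last n → k < j → M j k = 0 := by
    intro j k hj hkj
    have hjn : j.1 < n := by
      rcases eq_or_ne j (Fin.last n) with h | h
      · exact absurd h hj
      · exact Fin.val_lt_last h
    have hk : k ≠ Fin.last n := by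
      intro h; subst h
      exact absurd hkj (not_lt.2 (Fin.le_last j))
    rw [hMentry, hGC, if_neg hk, hsum_succ _ _ hjn, hGC, if_neg hk,
      hGentry, hGentry]
    have hkj' : k.1 < j.1 := hkj
    have h1 : ¬ (j = k) := by omega
    have h2 : ¬ ((⟨j.1 + 1, by omega⟩ : Fin (n + 1)) = k) := by
      simp only [Fin.ext_iff]; omega
    rw [if_neg h1, if_neg h2]
    simp only [Fin.val_mk]
    push_cast
    have e1 : ((j.1 : ℤ) + 1) ⊓ ((k.1 : ℤ) + 1) = (k.1 : ℤ) + 1 := by omega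
    have e2 : ((j.1 : ℤ) + 1 + 1) ⊓ ((k.1 : ℤ) + 1) = (k.1 : ℤ) + 1 := by omega
    rw [e1, e2]
    ring
  have hMdiag : ∀ j : Fin (n+1), j ≠ Fin.last n → M j j = p j := by
    intro j hj
    have hjn : j.1 < n := by
      rcases eq_or_ne j (Fin.last n) with h | h
      · exact absurd h hj
      · exact Fin.val_lt_last h
    have hjlast : j ≠ Fin.last n := hj
    rw [hMentry, hGC, if_neg hjlast, hsum_succ _ _ hjn, hGC, if_neg hjlast,
      hGentry, hGentry]
    have h2 : ¬ ((⟨j.1 + 1, by omega⟩ : Fin (n + 1)) = j) := by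
      simp only [Fin.ext_iff]; omega
    rw [if_pos rfl, if_neg h2]
    simp only [Fin.val_mk]
    push_cast
    have e1 : ((j.1 : ℤ) + 1) ⊓ ((j.1 : ℤ) + 1) = (j.1 : ℤ) + 1 := by omega
    have e2 : ((j.1 : ℤ) + 1 + 1) ⊓ ((j.1 : ℤ) + 1) = (j.1 : ℤ) + 1 := by omega
    rw [e1, e2]
    ring
  -- determinant of M by expansion along the last column
  have hsubdet : (M.submatrix Fin.castSucc Fin.castSucc).det = ∏ i : Fin n, p i.castSucc := by
    rw [Matrix.det_of_upperTriangular]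
    · apply Finset.prod_congr rfl
      intro i _
      exact hMdiag i.castSucc (Fin.castSucc_lt_last i).ne
    · intro a b hab
      simp only [id_eq] at hab
      exact hMtri _ _ (Fin.castSucc_lt_last a).ne (by exact_mod_cast Fin.castSucc_lt_castSucc_iff.2 hab)
  have hdetM : M.det = L * ∏ i : Fin n, p i.castSucc := by
    rw [Matrix.det_succ_column M (Fin.last n)]
    rw [Finset.sum_eq_single (Fin.last n)]
    · rw [hMlastlast, Fin.succAbove_last, hsubdet]
      have hpow : ((-1 : ℤ)) ^ ((Fin.last n).1 + (Fin.last n).1) = 1 :=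
        Even.neg_one_pow ⟨(Fin.last n).1, rfl⟩
      rw [hpow, one_mul]
    · intro b _ hb
      rw [hMcol b hb, mul_zero, zero_mul]
    · intro h; exact absurd (mem_univ _) h
  -- relate products
  have hprod : ∏ j ∈ univ.erase (Fin.last n), p j = ∏ i : Fin n, p i.castSucc := by
    have himg : (univ.erase (Fin.last n)) = Finset.image Fin.castSucc univ := by
      ext x
      constructor
      · intro hx
        have hx' : x ≠ Fin.last n := (Finset.mem_erase.1 hx).1
        obtain ⟨y, hy⟩ := Fin.exists_castSucc_eq.2 hx'
        exact Finset.mem_image.2 ⟨y, mem_univ _, hy⟩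
      · intro hx
        obtain ⟨y, _, rfl⟩ := Finset.mem_image.1 hx
        exact Finset.mem_erase.2 ⟨(Fin.castSucc_lt_last y).ne, mem_univ _⟩
    rw [himg, Finset.prod_image]
    intro x _ y _ h
    exact Fin.castSucc_injective n h
  -- conclude
  have h1 : G.det = (∏ k, α k) * F.det := Matrix.det_mul_row α F
  have h2 : M.det = G.det := by
    rw [hMdef, Matrix.det_mul, Matrix.det_mul, hRdet, hCdet, one_mul, mul_one]
  rw [← h1, ← h2, hdetM, hprod]
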